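/- The eigenvalues α_d = (−1)^d C(2k−d, k−d)/C(2k,k) of the replacement operator on the k-slice of a 3k-set satisfy: α₀ = 1, the recursion α_d = −α_{d−1}(k−d+1)/(2k−d+1), and the bounds 0 ≤ α_{2i} ≤ 4^{−i} and −2^{−2i−1} ≤ α_{2i+1} ≤ 0 for all valid indices. -/

import Mathlib

lemma stmt8_aux (k : ℕ) : ∀ d, d ≤ k → 2 ^ d * Nat.choose (2 * k - d) (k - d) ≤ Nat.choose (2 * k) k := by
  intro d
  induction d with
  | zero => simp
  | succ d ih =>
    intro hd
    have hdk : d ≤ k := le_of_lt hd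
    have ih' := ih hdk
    obtain ⟨a, ha⟩ : ∃ a, k - d = a + 1 := ⟨k - d - 1, by omega⟩
    obtain ⟨b, hb⟩ : ∃ b, 2 * k - d = b + 1 := ⟨2 * k - d - 1, by omega⟩
    have h1 : 2 * k - (d + 1) = b := by omega
    have h2 : k - (d + 1) = a := by omega
    have hab : 2 * (a + 1) ≤ b + 1 := by omega
    have key : (b + 1) * Nat.choose b a = Nat.choose (b + 1) (a + 1) * (a + 1) :=
      Nat.add_one_mul_choose_eq b a
    have key2 : 2 * Nat.choose b a ≤ Nat.choose (b + 1) (a + 1) := by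
      have : 2 * Nat.choose b a * (a + 1) ≤ Nat.choose (b + 1) (a + 1) * (a + 1) := by
        calc 2 * Nat.choose b a * (a + 1) = (2 * (a + 1)) * Nat.choose b a := by ring
          _ ≤ (b + 1) * Nat.choose b a := Nat.mul_le_mul_right _ hab
          _ = Nat.choose (b + 1) (a + 1) * (a + 1) := key
      exact Nat.le_of_mul_le_mul_right this (Nat.succ_pos a)
    calc 2 ^ (d + 1) * Nat.choose (2 * k - (d + 1)) (k - (d + 1))
        = 2 ^ d * (2 * Nat.choose b a) := by rw [h1, h2]; ring
      _ ≤ 2 ^ d * Nat.choose (b + 1) (a + 1) := Nat.mul_le_mul_left _ key2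
      _ = 2 ^ d * Nat.choose (2 * k - d) (k - d) := by rw [← ha, ← hb]
      _ ≤ Nat.choose (2 * k) k := ih'

theorem stmt8 (k : ℕ) :
    let alpha : ℕ → ℚ := fun d =>
      (-1) ^ d * ((Nat.choose (2 * k - d) (k - d) : ℕ) : ℚ) / ((Nat.choose (2 * k) k : ℕ) : ℚ)
    alpha 0 = 1 ∧
    (∀ d : ℕ, 1 ≤ d → d ≤ k →
      alpha d = -alpha (d - 1) * ((k : ℚ) - d + 1) / ((2 * k : ℚ) - d + 1)) ∧
    (∀ i : ℕ, 2 * i ≤ k → 0 ≤ alpha (2 * i) ∧ alpha (2 * i) ≤ (1 / 4) ^ i) ∧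
    (∀ i : ℕ, 2 * i + 1 ≤ k →
      -(1 / 2) * (1 / 4) ^ i ≤ alpha (2 * i + 1) ∧ alpha (2 * i + 1) ≤ 0) := by
  intro alpha
  have hC0 : (0 : ℚ) < ((Nat.choose (2 * k) k : ℕ) : ℚ) := by
    exact_mod_cast Nat.choose_pos (by omega)
  have habs : ∀ d, d ≤ k →
      ((Nat.choose (2 * k - d) (k - d) : ℕ) : ℚ) / ((Nat.choose (2 * k) k : ℕ) : ℚ) ≤ (1 / 2) ^ d := by
    intro d hd
    rw [div_le_iff₀ hC0]
    have := stmt8_aux k d hd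
    have h2 : ((2 ^ d * Nat.choose (2 * k - d) (k - d) : ℕ) : ℚ) ≤ ((Nat.choose (2 * k) k : ℕ) : ℚ) := by
      exact_mod_cast this
    push_cast at h2
    calc ((Nat.choose (2 * k - d) (k - d) : ℕ) : ℚ)
        = (1 / 2) ^ d * ((2:ℚ) ^ d * Nat.choose (2 * k - d) (k - d)) := by
          rw [div_pow, one_pow]
          field_simp
      _ ≤ (1 / 2) ^ d * ((Nat.choose (2 * k) k : ℕ) : ℚ) := by
          apply mul_le_mul_of_nonneg_left h2 (by positivity)
  refine ⟨?_, ?_, ?_, ?_⟩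
  · show ((-1:ℚ)) ^ 0 * _ / _ = 1
    simp [Nat.sub_zero]
    exact (Nat.choose_pos (by omega)).ne'
  · intro d hd1 hdk
    simp only [alpha]
    obtain ⟨e, rfl⟩ : ∃ e, d = e + 1 := ⟨d - 1, by omega⟩
    simp only [Nat.add_sub_cancel]
    have h1 : 2 * k - e = (2 * k - (e + 1)) + 1 := by omega
    have h2 : k - e = (k - (e + 1)) + 1 := by omega
    have key : ((2 * k - (e+1)) + 1) * Nat.choose (2 * k - (e+1)) (k - (e+1))
        = Nat.choose ((2 * k - (e+1)) + 1) ((k - (e+1)) + 1) * ((k - (e+1)) + 1) :=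
      Nat.add_one_mul_choose_eq _ _
    have keyQ : ((2*k:ℚ) - (e+1) + 1) * ((Nat.choose (2 * k - (e+1)) (k - (e+1)) : ℕ) : ℚ)
        = ((Nat.choose (2 * k - e) (k - e) : ℕ) : ℚ) * ((k:ℚ) - (e+1) + 1) := by
      rw [h1, h2]
      have hc1 : ((2*k:ℚ) - (e+1) + 1) = (((2 * k - (e+1)) + 1 : ℕ) : ℚ) := by
        rw [Nat.cast_add, Nat.cast_sub (by omega : e + 1 ≤ 2*k)]
        push_cast; ring
      have hc2 : ((k:ℚ) - (e+1) + 1) = (((k - (e+1)) + 1 : ℕ) : ℚ) := by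
        rw [Nat.cast_add, Nat.cast_sub (by omega : e + 1 ≤ k)]
        push_cast; ring
      rw [hc1, hc2]
      exact_mod_cast key
    have hden : ((2*k:ℚ) - (e+1) + 1) ≠ 0 := by
      have : (e:ℚ) + 1 ≤ 2*k := by exact_mod_cast (by omega : e + 1 ≤ 2*k)
      push_cast
      linarith
    push_cast [pow_succ]
    field_simp
    rw [neg_inj, eq_div_iff (by intro h; apply hden; linarith)]
    linear_combination keyQ
  · intro i hi
    have hs : alpha (2 * i) = ((Nat.choose (2 * k - 2*i) (k - 2*i) : ℕ) : ℚ) / ((Nat.choose (2 * k) k : ℕ) : ℚ) := by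
      simp only [alpha]
      rw [pow_mul]; norm_num
    constructor
    · rw [hs]; positivity
    · rw [hs]
      have := habs (2*i) hi
      calc _ ≤ ((1:ℚ)/2) ^ (2*i) := this
        _ = (1/4 : ℚ) ^ i := by rw [pow_mul]; norm_num
  · intro i hi
    have hs : alpha (2 * i + 1) = -(((Nat.choose (2 * k - (2*i+1)) (k - (2*i+1)) : ℕ) : ℚ) / ((Nat.choose (2 * k) k : ℕ) : ℚ)) := by
      simp only [alpha]
      rw [pow_succ, pow_mul]; norm_num; ring
    constructor
    · rw [hs]
      have := habs (2*i+1) hi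
      have h4 : ((1:ℚ)/2) ^ (2*i+1) = (1/2) * (1/4)^i := by
        rw [pow_succ, pow_mul]; norm_num; ring
      rw [h4] at this
      linarith
    · rw [hs]
      have : (0:ℚ) ≤ ((Nat.choose (2 * k - (2*i+1)) (k - (2*i+1)) : ℕ) : ℚ) / ((Nat.choose (2 * k) k : ℕ) : ℚ) := by positivity
      linarith
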